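/- Let ℓ : E → ℝ be a length function on a countable set E of edges with ℓ(e) > 0 for all e, and let s > 1 be real. Then the doubly indexed family ((4ℓ(e)²)/((2k+1)²π² + 4ℓ(e)²))^{s/2} indexed by (k, e) ∈ ℤ × E is summable if and only if ∑_{e ∈ E} ℓ(e)^s < ∞. -/
import Mathlib


open Real

lemma odd_real_pos (k : ℤ) : 0 < |2 * (k : ℝ) + 1| := by
  have h : (2 * k + 1 : ℤ) ≠ 0 := by omega
  have h2 : ((2 * k + 1 : ℤ) : ℝ) ≠ 0 := Int.cast_ne_zero.mpr h
  have h3 : ((2 * k + 1 : ℤ) : ℝ) = 2 * (k : ℝ) + 1 := by push_cast; ring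
  rw [h3] at h2
  exact abs_pos.mpr h2

lemma sq_to_rpow (t s : ℝ) (ht : 0 ≤ t) : (t ^ 2) ^ (s / 2) = t ^ s := by
  rw [← Real.rpow_natCast t 2, ← Real.rpow_mul ht]
  congr 1
  push_cast
  ring

lemma term_le_majorant (s : ℝ) (hs : 0 ≤ s) (t : ℝ) (ht : 0 ≤ t) (k : ℤ) :
    ((4 * t ^ 2) / ((2 * (k : ℝ) + 1) ^ 2 * π ^ 2 + 4 * t ^ 2)) ^ (s / 2) ≤
      (2 / π) ^ s * |2 * (k : ℝ) + 1| ^ (-s) * t ^ s := by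
  have hu : 0 < |2 * (k : ℝ) + 1| := odd_real_pos k
  have hπ := Real.pi_pos
  set u := |2 * (k : ℝ) + 1| with hu_def
  have hu2 : (2 * (k : ℝ) + 1) ^ 2 = u ^ 2 := (sq_abs _).symm
  have hden : 0 < (2 * (k : ℝ) + 1) ^ 2 * π ^ 2 := by
    rw [hu2]; positivity
  have h1 : (4 * t ^ 2) / ((2 * (k : ℝ) + 1) ^ 2 * π ^ 2 + 4 * t ^ 2) ≤
      (2 / π * u⁻¹ * t) ^ 2 := by
    have hrw : (2 / π * u⁻¹ * t) ^ 2 = (4 * t ^ 2) / ((2 * (k : ℝ) + 1) ^ 2 * π ^ 2) := by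
      rw [hu2]
      field_simp
      ring
    rw [hrw]
    apply div_le_div_of_nonneg_left (by positivity) hden
    nlinarith [sq_nonneg t]
  calc ((4 * t ^ 2) / ((2 * (k : ℝ) + 1) ^ 2 * π ^ 2 + 4 * t ^ 2)) ^ (s / 2)
      ≤ ((2 / π * u⁻¹ * t) ^ 2) ^ (s / 2) :=
        Real.rpow_le_rpow (by positivity) h1 (by positivity)
    _ = (2 / π * u⁻¹ * t) ^ s := sq_to_rpow _ s (by positivity)
    _ = (2 / π) ^ s * u ^ (-s) * t ^ s := by
        rw [Real.mul_rpow (by positivity) ht, Real.mul_rpow (by positivity) (by positivity),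
          Real.inv_rpow hu.le, ← Real.rpow_neg hu.le]

set_option maxHeartbeats 1000000 in
/-- For a countable edge set `E` with positive length function `ℓ` and a real `s > 1`,
the doubly indexed family `((4 ℓ(e)²)/((2k+1)² π² + 4 ℓ(e)²))^{s/2}`, `(k, e) ∈ ℤ × E`,
is summable iff `∑_e ℓ(e)^s < ∞`. -/
theorem summable_dirac_eigenvalues_iff (E : Type*) [Countable E]
    (ℓ : E → ℝ) (hpos : ∀ e, 0 < ℓ e) (s : ℝ) (hs : 1 < s) :
    Summable (fun p : ℤ × E =>
        ((4 * ℓ p.2 ^ 2) / ((2 * (p.1 : ℝ) + 1) ^ 2 * π ^ 2 + 4 * ℓ p.2 ^ 2)) ^ (s / 2)) ↔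
      Summable (fun e => ℓ e ^ s) := by
  have hπ := Real.pi_pos
  have hs0 : (0 : ℝ) ≤ s := by linarith
  constructor
  · -- forward direction
    intro H
    -- the k = 0 slice is summable
    have hg : Summable (fun e : E =>
        ((4 * ℓ e ^ 2) / (π ^ 2 + 4 * ℓ e ^ 2)) ^ (s / 2)) := by
      have h0 := H.comp_injective (i := fun e : E => ((0 : ℤ), e))
        (fun a b h => by simpa using h)
      simp only [Function.comp_def] at h0
      norm_num at h0
      exact h0
    set g : E → ℝ := fun e => ((4 * ℓ e ^ 2) / (π ^ 2 + 4 * ℓ e ^ 2)) ^ (s / 2) with hg_def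
    set c : ℝ := (4 / (π ^ 2 + 4)) ^ (s / 2) with hc_def
    have hc : 0 < c := by positivity
    -- only finitely many edges have ℓ e ≥ 1
    have hfin : {e : E | 1 ≤ ℓ e}.Finite := by
      have hev : ∀ᶠ e in Filter.cofinite, g e < c :=
        hg.tendsto_cofinite_zero.eventually (gt_mem_nhds hc)
      refine (Filter.eventually_cofinite.mp hev).subset ?_
      intro e he
      simp only [Set.mem_setOf_eq, not_lt]
      have ht : (1 : ℝ) ≤ ℓ e := he
      have hbase : 4 / (π ^ 2 + 4) ≤ 4 * ℓ e ^ 2 / (π ^ 2 + 4 * ℓ e ^ 2) := by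
        rw [div_le_div_iff₀ (by positivity) (by positivity)]
        nlinarith [mul_nonneg (by nlinarith : (0:ℝ) ≤ ℓ e ^ 2 - 1) (sq_nonneg π)]
      exact Real.rpow_le_rpow (by positivity) hbase (by positivity)
    rw [← hfin.summable_compl_iff]
    -- on the complement, ℓ e < 1 and ℓ e ^ s ≤ c⁻¹ * g e
    refine Summable.of_nonneg_of_le (fun e => Real.rpow_nonneg (hpos _).le s)
      (fun e => ?_) ((hg.subtype _).mul_left c⁻¹)
    obtain ⟨e, he⟩ := e
    have ht1 : ℓ e < 1 := not_le.mp he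
    have ht0 : 0 < ℓ e := hpos e
    have hkey : c * ℓ e ^ s ≤ g e := by
      have h1 : c * ℓ e ^ s = (4 * ℓ e ^ 2 / (π ^ 2 + 4)) ^ (s / 2) := by
        rw [hc_def, ← sq_to_rpow (ℓ e) s ht0.le,
          ← Real.mul_rpow (by positivity) (by positivity)]
        ring_nf
      rw [h1, hg_def]
      refine Real.rpow_le_rpow (by positivity) ?_ (by positivity)
      apply div_le_div_of_nonneg_left (by positivity) (by positivity)
      nlinarith
    calc ℓ e ^ s = c⁻¹ * (c * ℓ e ^ s) := by field_simp
      _ ≤ c⁻¹ * g e := mul_le_mul_of_nonneg_left hkey (by positivity)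
  · -- backward direction
    intro H
    have hZ : Summable (fun k : ℤ => |2 * (k : ℝ) + 1| ^ (-s)) := by
      have h0 := (Real.summable_abs_int_rpow hs).comp_injective
        (i := fun k : ℤ => 2 * k + 1) (fun a b h => by dsimp at h; omega)
      simp only [Function.comp_def] at h0
      have heq : (fun k : ℤ => |((2 * k + 1 : ℤ) : ℝ)| ^ (-s)) =
          (fun k : ℤ => |2 * (k : ℝ) + 1| ^ (-s)) := by
        funext k; push_cast; ring_nf
      rwa [heq] at h0
    have hmaj : Summable (fun p : ℤ × E =>
        ((2 / π) ^ s * |2 * (p.1 : ℝ) + 1| ^ (-s)) * ℓ p.2 ^ s) := by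
      refine Summable.mul_of_nonneg (hZ.mul_left ((2 / π) ^ s)) H ?_ ?_
      · intro k
        have := odd_real_pos k
        positivity
      · intro e
        exact Real.rpow_nonneg (hpos e).le s
    refine Summable.of_nonneg_of_le (fun p => Real.rpow_nonneg (by positivity) _)
      (fun p => ?_) hmaj
    exact term_le_majorant s hs0 (ℓ p.2) (hpos p.2).le p.1
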